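/- arXiv:0709.0885 — 2 statements merged into one kernel-verified Lean document; each statement's English description precedes it below -/
import Mathlib

section
/- For every integer m ≥ 1: if m is even then S_{3,0}(2^m) = 2·3^{m/2 − 1}, and if m is odd then S_{3,0}(2^m) = 3^{(m−1)/2}. -/
/-- binary digit sum -/
def sigma2 (n : ℕ) : ℕ := (Nat.digits 2 n).sum

/-- `S m l x = Σ_{0 ≤ n < x, n ≡ l (mod m)} (−1)^{σ(n)}` -/
def S (m l x : ℕ) : ℤ :=
  ∑ n ∈ (Finset.range x).filter (fun n => n % m = l), (-1 : ℤ) ^ sigma2 n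

lemma sigma2_two_mul (j : ℕ) : sigma2 (2 * j) = sigma2 j := by
  rcases Nat.eq_zero_or_pos j with h | h
  · simp [h]
  · unfold sigma2
    rw [Nat.digits_def' (by norm_num : 1 < 2) (by omega)]
    simp [Nat.mul_div_cancel_left, Nat.mul_mod_right]

lemma sigma2_two_mul_add_one (j : ℕ) : sigma2 (2 * j + 1) = sigma2 j + 1 := by
  unfold sigma2
  rw [Nat.digits_def' (by norm_num : 1 < 2) (by omega)]
  have h1 : (2 * j + 1) % 2 = 1 := by omega
  have h2 : (2 * j + 1) / 2 = j := by omega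
  rw [h1, h2]
  simp [Nat.add_comm]

lemma S_eq (m l x : ℕ) :
    S m l x = ∑ n ∈ Finset.range x, if n % m = l then (-1 : ℤ) ^ sigma2 n else 0 := by
  rw [S, Finset.sum_filter]

lemma double_sum (f : ℕ → ℤ) (x : ℕ) :
    ∑ n ∈ Finset.range (2 * x), f n = ∑ j ∈ Finset.range x, (f (2 * j) + f (2 * j + 1)) := by
  induction x with
  | zero => simp
  | succ n ih =>
      have : 2 * (n + 1) = (2 * n + 1) + 1 := by ring
      rw [this, Finset.sum_range_succ, Finset.sum_range_succ, ih, Finset.sum_range_succ]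
      ring

lemma S_rec0 (m : ℕ) : S 3 0 (2 ^ (m + 1)) = S 3 0 (2 ^ m) - S 3 1 (2 ^ m) := by
  rw [pow_succ, mul_comm, S_eq, S_eq, S_eq, double_sum, ← Finset.sum_sub_distrib]
  apply Finset.sum_congr rfl
  intro j _
  have h3 : j % 3 = 0 ∨ j % 3 = 1 ∨ j % 3 = 2 := by omega
  have hs1 : (-1 : ℤ) ^ sigma2 (2 * j) = (-1 : ℤ) ^ sigma2 j := by rw [sigma2_two_mul]
  have hs2 : (-1 : ℤ) ^ sigma2 (2 * j + 1) = -(-1 : ℤ) ^ sigma2 j := by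
    rw [sigma2_two_mul_add_one, pow_succ]; ring
  rcases h3 with h | h | h <;>
    · have e1 : (2 * j) % 3 = 2 * (j % 3) % 3 := by omega
      have e2 : (2 * j + 1) % 3 = (2 * (j % 3) + 1) % 3 := by omega
      simp [e1, e2, h, hs1, hs2]

lemma S_rec1 (m : ℕ) : S 3 1 (2 ^ (m + 1)) = S 3 2 (2 ^ m) - S 3 0 (2 ^ m) := by
  rw [pow_succ, mul_comm, S_eq, S_eq, S_eq, double_sum, ← Finset.sum_sub_distrib]
  apply Finset.sum_congr rfl
  intro j _
  have h3 : j % 3 = 0 ∨ j % 3 = 1 ∨ j % 3 = 2 := by omega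
  have hs1 : (-1 : ℤ) ^ sigma2 (2 * j) = (-1 : ℤ) ^ sigma2 j := by rw [sigma2_two_mul]
  have hs2 : (-1 : ℤ) ^ sigma2 (2 * j + 1) = -(-1 : ℤ) ^ sigma2 j := by
    rw [sigma2_two_mul_add_one, pow_succ]; ring
  rcases h3 with h | h | h <;>
    · have e1 : (2 * j) % 3 = 2 * (j % 3) % 3 := by omega
      have e2 : (2 * j + 1) % 3 = (2 * (j % 3) + 1) % 3 := by omega
      simp [e1, e2, h, hs1, hs2]

lemma S_rec2 (m : ℕ) : S 3 2 (2 ^ (m + 1)) = S 3 1 (2 ^ m) - S 3 2 (2 ^ m) := by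
  rw [pow_succ, mul_comm, S_eq, S_eq, S_eq, double_sum, ← Finset.sum_sub_distrib]
  apply Finset.sum_congr rfl
  intro j _
  have h3 : j % 3 = 0 ∨ j % 3 = 1 ∨ j % 3 = 2 := by omega
  have hs1 : (-1 : ℤ) ^ sigma2 (2 * j) = (-1 : ℤ) ^ sigma2 j := by rw [sigma2_two_mul]
  have hs2 : (-1 : ℤ) ^ sigma2 (2 * j + 1) = -(-1 : ℤ) ^ sigma2 j := by
    rw [sigma2_two_mul_add_one, pow_succ]; ring
  rcases h3 with h | h | h <;>
    · have e1 : (2 * j) % 3 = 2 * (j % 3) % 3 := by omega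
      have e2 : (2 * j + 1) % 3 = (2 * (j % 3) + 1) % 3 := by omega
      simp [e1, e2, h, hs1, hs2]

lemma S_triple (k : ℕ) :
    S 3 0 (2 ^ (2 * k + 1)) = 3 ^ k ∧ S 3 1 (2 ^ (2 * k + 1)) = -3 ^ k ∧
      S 3 2 (2 ^ (2 * k + 1)) = 0 := by
  induction k with
  | zero =>
      refine ⟨?_, ?_, ?_⟩ <;>
        norm_num [S, sigma2, Finset.sum_filter, Finset.sum_range_succ]
  | succ n ih =>
      obtain ⟨h0, h1, h2⟩ := ih
      have H0 : S 3 0 (2 ^ (2 * n + 1 + 1)) = 2 * 3 ^ n := by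
        rw [S_rec0, h0, h1]; ring
      have H1 : S 3 1 (2 ^ (2 * n + 1 + 1)) = -3 ^ n := by
        rw [S_rec1, h2, h0]; ring
      have H2 : S 3 2 (2 ^ (2 * n + 1 + 1)) = -3 ^ n := by
        rw [S_rec2, h1, h2]; ring
      have e : 2 * (n + 1) + 1 = (2 * n + 1 + 1) + 1 := by ring
      rw [e]
      refine ⟨?_, ?_, ?_⟩
      · rw [S_rec0, H0, H1]; ring
      · rw [S_rec1, H2, H0]; ring
      · rw [S_rec2, H1, H2]; ring

theorem stmt_0 (m : ℕ) (hm : 1 ≤ m) :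
    (Even m → S 3 0 (2 ^ m) = 2 * 3 ^ (m / 2 - 1)) ∧
    (Odd m → S 3 0 (2 ^ m) = 3 ^ ((m - 1) / 2)) := by
  constructor
  · rintro ⟨r, hr⟩
    obtain ⟨k, hk⟩ : ∃ k, m = 2 * k + 2 := ⟨r - 1, by omega⟩
    obtain ⟨h0, h1, h2⟩ := S_triple k
    have e : m = (2 * k + 1) + 1 := by omega
    have hm2 : m / 2 - 1 = k := by omega
    rw [hm2, e, S_rec0, h0, h1]
    ring
  · rintro ⟨r, hr⟩
    obtain ⟨h0, _, _⟩ := S_triple r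
    have e : m = 2 * r + 1 := by omega
    have e2 : (m - 1) / 2 = r := by omega
    rw [e2, e, h0]
end

section
/- For all odd integers n and m with 1 ≤ m ≤ n − 2, one has S_{3,0}([2^n, 2^n + 2^m)) = 3^{(m−1)/2}. -/
/-- `Sint m l x y = S_{m,l}([x,y)) = S_{m,l}(y) − S_{m,l}(x)` -/
def Sint (m l x y : ℕ) : ℤ := S m l y - S m l x

lemma sigma2_zero : sigma2 0 = 0 := by simp [sigma2]

lemma sigma2_rec (j : ℕ) : sigma2 j = j % 2 + sigma2 (j / 2) := by
  rcases Nat.eq_zero_or_pos j with h | h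
  · simp [h, sigma2]
  · unfold sigma2
    rw [Nat.digits_def' (by norm_num) h]
    simp

lemma sigma2_one : sigma2 1 = 1 := by
  rw [sigma2_rec]; norm_num [sigma2_zero]

lemma sigma2_pow_add : ∀ n j : ℕ, j < 2 ^ n → sigma2 (2 ^ n + j) = sigma2 j + 1 := by
  intro n
  induction n with
  | zero =>
      intro j hj
      interval_cases j
      norm_num [sigma2_zero, sigma2_one]
  | succ k ih =>
      intro j hj
      rw [sigma2_rec (2 ^ (k+1) + j), sigma2_rec j]
      have h1 : (2 ^ (k+1) + j) % 2 = j % 2 := by omega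
      have h2 : (2 ^ (k+1) + j) / 2 = 2 ^ k + j / 2 := by
        have : (2:ℕ) ^ (k+1) = 2 * 2 ^ k := by ring
        omega
      rw [h1, h2, ih (j / 2) (by omega)]
      omega

lemma two_pow_mod_three (m : ℕ) : 2 ^ m % 3 = if m % 2 = 0 then 1 else 2 := by
  induction m with
  | zero => decide
  | succ k ih =>
      rw [pow_succ, Nat.mul_mod, ih]
      by_cases hk2 : k % 2 = 0
      · have h1 : (k+1) % 2 = 1 := by omega
        simp [hk2, h1]
      · have h0 : ¬ ((k+1) % 2 = 1) := by omega
        have h1 : (k+1) % 2 = 0 := by omega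
        simp [hk2, h1]
lemma S_two_pow_succ (m l l' : ℕ) (h : ∀ j, (2 ^ m + j) % 3 = l ↔ j % 3 = l') :
    S 3 l (2 ^ (m + 1)) = S 3 l (2 ^ m) - S 3 l' (2 ^ m) := by
  have hx : (2:ℕ) ^ (m+1) = 2 ^ m + 2 ^ m := by ring
  unfold S
  rw [hx, Finset.sum_filter, Finset.sum_filter, Finset.sum_filter, Finset.sum_range_add]
  have key : ∀ j ∈ Finset.range (2 ^ m),
      (if (2 ^ m + j) % 3 = l then ((-1:ℤ)) ^ sigma2 (2 ^ m + j) else 0)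
        = -(if j % 3 = l' then (-1:ℤ) ^ sigma2 j else 0) := by
    intro j hj
    rw [Finset.mem_range] at hj
    rw [sigma2_pow_add m j hj]
    by_cases hc : j % 3 = l'
    · rw [if_pos hc, if_pos ((h j).mpr hc), pow_succ]; ring
    · rw [if_neg hc, if_neg (fun hh => hc ((h j).mp hh))]; ring
  rw [Finset.sum_congr rfl key, Finset.sum_neg_distrib]
  ring

lemma S_two : ∀ l, S 3 l 2 = if l = 0 then 1 else if l = 1 then -1 else 0 := by
  intro l
  unfold S
  rw [Finset.sum_filter, Finset.sum_range_succ, Finset.sum_range_succ,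
    Finset.sum_range_zero, sigma2_zero, sigma2_one]
  norm_num
  by_cases h0 : l = 0
  · simp [h0]
  · by_cases h1 : l = 1 <;> simp [h0, h1] <;> omega

lemma triple (k : ℕ) :
    S 3 0 (2 ^ (2 * k + 1)) = 3 ^ k ∧ S 3 1 (2 ^ (2 * k + 1)) = -(3 ^ k) ∧
      S 3 2 (2 ^ (2 * k + 1)) = 0 := by
  induction k with
  | zero =>
      refine ⟨?_, ?_, ?_⟩ <;> simp [S_two]
  | succ k ih =>
      obtain ⟨ha, hb, hc⟩ := ih
      set m := 2 * k + 1 with hm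
      have hmod : 2 ^ m % 3 = 2 := by rw [two_pow_mod_three]; simp [hm, Nat.add_mod, Nat.mul_mod]
      have hmod' : 2 ^ (m + 1) % 3 = 1 := by
        rw [two_pow_mod_three]
        have : (m + 1) % 2 = 0 := by omega
        simp [this]
      have ra : S 3 0 (2 ^ (m+1)) = S 3 0 (2 ^ m) - S 3 1 (2 ^ m) :=
        S_two_pow_succ m 0 1 (fun j => by rw [Nat.add_mod, hmod]; omega)
      have rb : S 3 1 (2 ^ (m+1)) = S 3 1 (2 ^ m) - S 3 2 (2 ^ m) :=
        S_two_pow_succ m 1 2 (fun j => by rw [Nat.add_mod, hmod]; omega)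
      have rc : S 3 2 (2 ^ (m+1)) = S 3 2 (2 ^ m) - S 3 0 (2 ^ m) :=
        S_two_pow_succ m 2 0 (fun j => by rw [Nat.add_mod, hmod]; omega)
      have sa : S 3 0 (2 ^ (m+2)) = S 3 0 (2 ^ (m+1)) - S 3 2 (2 ^ (m+1)) :=
        S_two_pow_succ (m+1) 0 2 (fun j => by rw [Nat.add_mod, hmod']; omega)
      have sb : S 3 1 (2 ^ (m+2)) = S 3 1 (2 ^ (m+1)) - S 3 0 (2 ^ (m+1)) :=
        S_two_pow_succ (m+1) 1 0 (fun j => by rw [Nat.add_mod, hmod']; omega)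
      have sc : S 3 2 (2 ^ (m+2)) = S 3 2 (2 ^ (m+1)) - S 3 1 (2 ^ (m+1)) :=
        S_two_pow_succ (m+1) 2 1 (fun j => by rw [Nat.add_mod, hmod']; omega)
      have hme : 2 * (k + 1) + 1 = m + 2 := by omega
      rw [hme]
      refine ⟨?_, ?_, ?_⟩
      · rw [sa, ra, rc, ha, hb, hc]; ring
      · rw [sb, rb, ra, ha, hb, hc]; ring
      · rw [sc, rc, rb, ha, hb, hc]; ring

theorem stmt_2 (n m : ℕ) (hn : Odd n) (hm : Odd m) (h1 : 1 ≤ m) (h2 : m ≤ n - 2) :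
    Sint 3 0 (2 ^ n) (2 ^ n + 2 ^ m) = 3 ^ ((m - 1) / 2) := by
  obtain ⟨k, hk⟩ := hm
  have hn3 : 3 ≤ n := by rcases hn with ⟨t, ht⟩; omega
  have hmn : m ≤ n := by omega
  have hnmod : 2 ^ n % 3 = 2 := by
    rw [two_pow_mod_three]
    rcases hn with ⟨t, ht⟩
    have : n % 2 = 1 := by omega
    simp [this]
  have key : Sint 3 0 (2 ^ n) (2 ^ n + 2 ^ m) = -(S 3 1 (2 ^ m)) := by
    unfold Sint S
    rw [Finset.sum_filter, Finset.sum_filter, Finset.sum_filter, Finset.sum_range_add]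
    have key2 : ∀ j ∈ Finset.range (2 ^ m),
        (if (2 ^ n + j) % 3 = 0 then ((-1:ℤ)) ^ sigma2 (2 ^ n + j) else 0)
          = -(if j % 3 = 1 then (-1:ℤ) ^ sigma2 j else 0) := by
      intro j hj
      rw [Finset.mem_range] at hj
      have hjn : j < 2 ^ n := lt_of_lt_of_le hj (Nat.pow_le_pow_right (by norm_num) hmn)
      have hcond : (2 ^ n + j) % 3 = 0 ↔ j % 3 = 1 := by rw [Nat.add_mod, hnmod]; omega
      rw [sigma2_pow_add n j hjn]
      by_cases hc : j % 3 = 1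
      · rw [if_pos hc, if_pos (hcond.mpr hc), pow_succ]; ring
      · rw [if_neg hc, if_neg (fun hh => hc (hcond.mp hh))]; ring
    rw [Finset.sum_congr rfl key2, Finset.sum_neg_distrib]
    ring
  rw [key]
  have ht := (triple k).2.1
  rw [← hk] at ht
  rw [ht]
  have hq : (m - 1) / 2 = k := by omega
  rw [hq]
  ring
end
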